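/- Let R be a commutative ring, N ≥ 1, and x, y : Fin N → R. Let A be the (2N)×(2N) matrix over R with rows and columns indexed by Fin N × Fin 2, whose only nonzero entries are: A (i,0) (i,0) = x i, A (i,0) (i,1) = -1, A (i,1) (i,1) = 1, and A (i,1) (i+1 mod N, 0) = y i, for each i ∈ Fin N. Then det A = (∏_{i} x i) + (-1)^{N+1} · (∏_{i} y i). In particular, when N is odd, det A = ∏ x i + ∏ y i. -/

import Mathlib

open Matrix Finset Equiv

open Fin.NatCast in
private lemma detM_aux {R : Type*} [CommRing R] (n : ℕ) (x y : Fin (n+1) → R) :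
    (Matrix.of fun i j : Fin (n+1) =>
        (if i = j then x i else 0) + (if j = i + 1 then y i else 0)).det
      = (∏ i, x i) + (-1 : R) ^ n * ∏ i, y i := by
  cases n with
  | zero =>
    rw [Matrix.det_fin_one]
    simp
  | succ m =>
    set M : Matrix (Fin (m+2)) (Fin (m+2)) R := Matrix.of fun i j =>
        (if i = j then x i else 0) + (if j = i + 1 then y i else 0) with hM
    have hMapp : ∀ i j, M i j = (if i = j then x i else 0) + (if j = i + 1 then y i else 0) :=
      fun i j => rfl
    set σ₀ : Equiv.Perm (Fin (m+2)) := (finRotate (m+2))⁻¹ with hσ₀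
    have hσ₀app : ∀ i, σ₀ i = i - 1 := by
      intro i
      have h : finRotate (m+2) (i - 1) = i := by
        rw [finRotate_succ_apply, sub_add_cancel]
      rw [hσ₀, Equiv.Perm.inv_def, Equiv.symm_apply_eq]
      exact h.symm
    have hone : (1 : Fin (m+2)) ≠ 0 := by simp
    have key : ∀ σ : Equiv.Perm (Fin (m+2)), σ ∉ ({1, σ₀} : Finset (Equiv.Perm (Fin (m+2)))) →
        Equiv.Perm.sign σ • ∏ i, M (σ i) i = 0 := by
      intro σ hσ
      simp only [Finset.mem_insert, Finset.mem_singleton, not_or] at hσ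
      obtain ⟨hσ1, hσ2⟩ := hσ
      by_cases hall : ∀ i, σ i = i ∨ σ i = i - 1
      · by_cases hS : ∃ i, σ i = i - 1
        · obtain ⟨i₀, hi₀⟩ := hS
          exfalso
          apply hσ2
          have keyk : ∀ k : ℕ, σ (i₀ - (k : Fin (m+2))) = i₀ - (k : Fin (m+2)) - 1 := by
            intro k
            induction k with
            | zero => simpa using hi₀
            | succ k ih =>
              have hcast : ((k+1 : ℕ) : Fin (m+2)) = (k : Fin (m+2)) + 1 := by push_cast; ring
              rw [hcast, sub_add_eq_sub_sub]
              rcases hall (i₀ - (k : Fin (m+2)) - 1) with h | h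
              · exfalso
                have := σ.injective (h.trans ih.symm)
                rw [sub_eq_self] at this
                exact hone this
              · exact h
          ext j
          have hk := keyk (i₀ - j).val
          rw [Fin.cast_val_eq_self, sub_sub_cancel] at hk
          rw [hk, hσ₀app]
        · exfalso
          apply hσ1
          ext j
          rcases hall j with h | h
          · simp [h]
          · exact absurd ⟨j, h⟩ hS
      · push_neg at hall
        obtain ⟨i, hi1, hi2⟩ := hall
        have hMz : M (σ i) i = 0 := by
          rw [hMapp, if_neg hi1, if_neg, add_zero]
          intro h
          exact hi2 (by rw [eq_sub_iff_add_eq, ← h])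
        have hp : ∏ j, M (σ j) j = 0 := Finset.prod_eq_zero (Finset.mem_univ i) hMz
        rw [hp, smul_zero]
    have h1σ₀ : (1 : Equiv.Perm (Fin (m+2))) ≠ σ₀ := by
      intro h
      have h0 : (0 : Fin (m+2)) = 0 - 1 := by
        conv_lhs => rw [show (0 : Fin (m+2)) = (1 : Equiv.Perm (Fin (m+2))) 0 from rfl, h,
          hσ₀app]
      rw [zero_sub] at h0
      exact hone (neg_eq_zero.mp h0.symm)
    have hsub : ∑ σ : Equiv.Perm (Fin (m+2)), Equiv.Perm.sign σ • ∏ i, M (σ i) i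
        = ∑ σ ∈ ({1, σ₀} : Finset (Equiv.Perm (Fin (m+2)))),
            Equiv.Perm.sign σ • ∏ i, M (σ i) i :=
      (Finset.sum_subset (Finset.subset_univ _) (fun σ _ h => key σ h)).symm
    rw [Matrix.det_apply, hsub, Finset.sum_pair h1σ₀]
    have hid : Equiv.Perm.sign (1 : Equiv.Perm (Fin (m+2)))
        • ∏ i, M ((1 : Equiv.Perm (Fin (m+2))) i) i = ∏ i, x i := by
      rw [Equiv.Perm.sign_one, one_smul]
      apply Finset.prod_congr rfl
      intro i _
      rw [Equiv.Perm.coe_one, id_eq, hMapp, if_pos rfl, if_neg, add_zero]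
      intro h
      exact hone (left_eq_add.mp h)
    have hrot : Equiv.Perm.sign σ₀ • ∏ i, M (σ₀ i) i = (-1 : R) ^ (m+1) * ∏ i, y i := by
      have hsign : Equiv.Perm.sign σ₀ = (-1 : ℤˣ) ^ (m+1) := by
        rw [hσ₀, Equiv.Perm.sign_inv, sign_finRotate]; rfl
      have hprod : ∏ i, M (σ₀ i) i = ∏ i, y i := by
        have hy' : ∀ i : Fin (m+2), M (σ₀ i) i = y (i - 1) := by
          intro i
          rw [hσ₀app, hMapp, if_neg, if_pos (by rw [sub_add_cancel]), zero_add]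
          intro h
          exact hone (sub_eq_self.mp h)
        rw [Finset.prod_congr rfl fun i _ => hy' i]
        exact Equiv.prod_comp (Equiv.subRight (1 : Fin (m+2))) y
      rw [hsign, hprod, Units.smul_def, zsmul_eq_mul]
      push_cast
      ring
    rw [hid, hrot]

/-- Block-cyclic determinant identity: if `A` is the `2N × 2N` matrix (rows and columns
indexed by `Fin N × Fin 2`) whose only nonzero entries are
`A (i,0) (i,0) = x i`, `A (i,0) (i,1) = -1`, `A (i,1) (i,1) = 1`, and
`A (i,1) (i+1,0) = y i` (indices mod `N`), then
`det A = ∏ x i + (-1)^(N+1) ∏ y i`; in particular `det A = ∏ x i + ∏ y i` for odd `N`. -/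
theorem block_cyclic_det (R : Type*) [CommRing R] (N : ℕ) [NeZero N] (hN : 1 ≤ N)
    (x y : Fin N → R) (A : Matrix (Fin N × Fin 2) (Fin N × Fin 2) R)
    (hx : ∀ i : Fin N, A (i, 0) (i, 0) = x i)
    (h1 : ∀ i : Fin N, A (i, 0) (i, 1) = -1)
    (h2 : ∀ i : Fin N, A (i, 1) (i, 1) = 1)
    (hy : ∀ i : Fin N, A (i, 1) (i + 1, 0) = y i)
    (hzero : ∀ p q : Fin N × Fin 2,
        ¬ ((p.2 = 0 ∧ q = (p.1, (0 : Fin 2))) ∨ (p.2 = 0 ∧ q = (p.1, (1 : Fin 2))) ∨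
            (p.2 = 1 ∧ q = (p.1, (1 : Fin 2))) ∨ (p.2 = 1 ∧ q = (p.1 + 1, (0 : Fin 2)))) →
          A p q = 0) :
    A.det = (∏ i, x i) + (-1 : R) ^ (N + 1) * ∏ i, y i ∧
      (Odd N → A.det = (∏ i, x i) + ∏ i, y i) := by
  obtain ⟨n, rfl⟩ : ∃ n, N = n + 1 := ⟨N - 1, (Nat.succ_pred_eq_of_pos hN).symm⟩
  have main : A.det = (∏ i, x i) + (-1 : R) ^ (n + 1 + 1) * ∏ i, y i := by
    let e : Fin (n+1) × Fin 2 ≃ (Fin (n+1) ⊕ Fin (n+1)) :=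
      { toFun := fun p => if p.2 = 0 then Sum.inl p.1 else Sum.inr p.1
        invFun := Sum.elim (fun i => (i, 0)) (fun i => (i, 1))
        left_inv := by rintro ⟨i, j⟩; fin_cases j <;> simp
        right_inv := by rintro (i | i) <;> simp }
    have he0 : ∀ i : Fin (n+1), e (i, 0) = Sum.inl i := fun i => rfl
    have he1 : ∀ i : Fin (n+1), e (i, 1) = Sum.inr i := fun i => rfl
    let Y : Matrix (Fin (n+1)) (Fin (n+1)) R :=
      Matrix.of fun i j => if j = i + 1 then y i else 0
    let B : Matrix (Fin (n+1) ⊕ Fin (n+1)) (Fin (n+1) ⊕ Fin (n+1)) R :=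
      Matrix.fromBlocks (Matrix.diagonal x) (-1) Y 1
    have hA : A = B.submatrix e e := by
      have h2c : ∀ j : Fin 2, j = 0 ∨ j = 1 := by decide
      ext ⟨i, ji⟩ ⟨k, jk⟩
      rcases h2c ji with rfl | rfl <;> rcases h2c jk with rfl | rfl <;>
        rw [Matrix.submatrix_apply]
      · rw [he0 i, he0 k]
        simp only [B, Matrix.fromBlocks_apply₁₁]
        by_cases h : i = k
        · subst h; rw [Matrix.diagonal_apply_eq]; exact hx i
        · rw [Matrix.diagonal_apply_ne _ h]
          exact hzero (i, 0) (k, 0) (by simp [Prod.ext_iff, Ne.symm h])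
      · rw [he0 i, he1 k]
        simp only [B, Matrix.fromBlocks_apply₁₂, Matrix.neg_apply]
        by_cases h : i = k
        · subst h; rw [Matrix.one_apply_eq]; exact h1 i
        · rw [Matrix.one_apply_ne h, neg_zero]
          exact hzero (i, 0) (k, 1) (by simp [Prod.ext_iff, Ne.symm h])
      · rw [he1 i, he0 k]
        simp only [B, Matrix.fromBlocks_apply₂₁, Y, Matrix.of_apply]
        by_cases h : k = i + 1
        · subst h; rw [if_pos rfl]; exact hy i
        · rw [if_neg h]
          exact hzero (i, 1) (k, 0) (by simp [Prod.ext_iff, h])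
      · rw [he1 i, he1 k]
        simp only [B, Matrix.fromBlocks_apply₂₂]
        by_cases h : i = k
        · subst h; rw [Matrix.one_apply_eq]; exact h2 i
        · rw [Matrix.one_apply_ne h]
          exact hzero (i, 1) (k, 1) (by simp [Prod.ext_iff, Ne.symm h])
    have hBM : Matrix.diagonal x - (-1) * Y = Matrix.of (fun i j : Fin (n+1) =>
        (if i = j then x i else 0) + (if j = i + 1 then y i else 0)) := by
      ext i j
      simp [Matrix.diagonal_apply, Y, sub_eq_add_neg, neg_one_mul]
    rw [hA, Matrix.det_submatrix_equiv_self e B,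
      show B.det = (Matrix.diagonal x - (-1) * Y).det from
        Matrix.det_fromBlocks_one₂₂ _ _ _,
      hBM, detM_aux n x y]
    congr 1
    rw [pow_succ, pow_succ]
    ring
  refine ⟨main, fun hodd => ?_⟩
  rw [main, (hodd.add_one).neg_one_pow, one_mul]
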